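/- For integers 2 ≤ k with n ≥ 2k, the number f(n,k) of standard Young tableaux of n cells whose (1,2) entry is k satisfies f(n,k) = Σ_{j=0}^{k−1} C(n−k, k−j−1)·t_{n−2k+j+2} − C(n−k, k−1)·t_{n−2k+1} − C(n−k, k)·t_{n−2k}. -/

import Mathlib

/-- A standard Young tableau of `n` cells, encoded as the chain of Young diagrams
`chain i` = shape formed by the cells containing the entries `1,…,i`. -/
structure SYT (n : ℕ) where
  chain : ℕ → YoungDiagram
  mono : Monotone chain
  card_eq : ∀ i ≤ n, (chain i).card = i
  stable : ∀ i, n ≤ i → chain i = chain n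

/-- `f(n,k)`: the number of standard Young tableaux of `n` cells whose `(1,2)` entry
(0-indexed cell `(0,1)`) is `k`. -/
noncomputable def f12 (n k : ℕ) : ℕ :=
  Nat.card {T : SYT n // (0, 1) ∈ T.chain k ∧ (0, 1) ∉ T.chain (k - 1)}

/-- `t_n`, the number of involutions of `[n]` (with `t_0 = 1`). -/
noncomputable def tInv (n : ℕ) : ℕ := Nat.card {φ : Equiv.Perm (Fin n) // φ * φ = 1}

namespace SYTproof
open Finset

/-- `c` is an addable corner of `μ`. -/
def IsAdd (μ : YoungDiagram) (c : ℕ × ℕ) : Prop :=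
  c ∉ μ ∧ (c.1 = 0 ∨ (c.1 - 1, c.2) ∈ μ) ∧ (c.2 = 0 ∨ (c.1, c.2 - 1) ∈ μ)

/-- `c` is a removable corner of `μ`. -/
def IsRem (μ : YoungDiagram) (c : ℕ × ℕ) : Prop :=
  c ∈ μ ∧ (c.1 + 1, c.2) ∉ μ ∧ (c.1, c.2 + 1) ∉ μ

instance (μ : YoungDiagram) : DecidablePred (IsAdd μ) := fun c => by
  unfold IsAdd; infer_instance

instance (μ : YoungDiagram) : DecidablePred (IsRem μ) := fun c => by
  unfold IsRem; infer_instance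

theorem isAdd_lowerSet {μ : YoungDiagram} {c : ℕ × ℕ} (h : IsAdd μ c) :
    IsLowerSet (↑(insert c μ.cells) : Set (ℕ × ℕ)) := by
  obtain ⟨h1, h2, h3⟩ := h
  intro y x hxy hy
  simp only [Finset.coe_insert, Set.mem_insert_iff, Finset.mem_coe, YoungDiagram.mem_cells] at *
  rcases hy with rfl | hy
  · rcases eq_or_ne x y with rfl | hne
    · exact Or.inl rfl
    · right
      have hxy1 : x.1 ≤ y.1 := hxy.1
      have hxy2 : x.2 ≤ y.2 := hxy.2
      rcases Nat.lt_or_ge x.1 y.1 with hlt | hge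
      · rcases h2 with h0 | h2
        · omega
        · exact μ.up_left_mem (by omega) (by exact hxy2) h2
      · have : x.2 < y.2 := by
          rcases Nat.lt_or_ge x.2 y.2 with h' | h'
          · exact h'
          · exfalso; apply hne; ext <;> omega
        rcases h3 with h0 | h3
        · omega
        · exact μ.up_left_mem (by omega) (by omega) h3
  · exact Or.inr (μ.isLowerSet hxy hy)

theorem isRem_lowerSet {μ : YoungDiagram} {c : ℕ × ℕ} (h : IsRem μ c) :
    IsLowerSet (↑(μ.cells.erase c) : Set (ℕ × ℕ)) := by
  obtain ⟨h1, h2, h3⟩ := h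
  intro y x hxy hy
  simp only [Finset.coe_erase, Set.mem_diff, Finset.mem_coe, YoungDiagram.mem_cells,
    Set.mem_singleton_iff] at *
  refine ⟨μ.isLowerSet hxy hy.1, ?_⟩
  rintro rfl
  rcases eq_or_ne x y with rfl | hne
  · exact hy.2 rfl
  · have hxy1 : x.1 ≤ y.1 := hxy.1
    have hxy2 : x.2 ≤ y.2 := hxy.2
    have : x.1 < y.1 ∨ x.2 < y.2 := by
      by_contra hc; push_neg at hc; apply hne; ext <;> omega
    rcases this with hlt | hlt
    · exact h2 (μ.up_left_mem (by omega) hxy2 hy.1)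
    · exact h3 (μ.up_left_mem hxy1 (by omega) hy.1)

/-- Add a cell to a Young diagram (junk value `μ` if not addable). -/
def addC (μ : YoungDiagram) (c : ℕ × ℕ) : YoungDiagram :=
  if h : IsAdd μ c then ⟨insert c μ.cells, isAdd_lowerSet h⟩ else μ

/-- Remove a cell from a Young diagram (junk value `μ` if not removable). -/
def subC (μ : YoungDiagram) (c : ℕ × ℕ) : YoungDiagram :=
  if h : IsRem μ c then ⟨μ.cells.erase c, isRem_lowerSet h⟩ else μ

theorem addC_cells {μ : YoungDiagram} {c : ℕ × ℕ} (h : IsAdd μ c) :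
    (addC μ c).cells = insert c μ.cells := by
  rw [addC, dif_pos h]

theorem subC_cells {μ : YoungDiagram} {c : ℕ × ℕ} (h : IsRem μ c) :
    (subC μ c).cells = μ.cells.erase c := by
  rw [subC, dif_pos h]

theorem addC_card {μ : YoungDiagram} {c : ℕ × ℕ} (h : IsAdd μ c) :
    (addC μ c).card = μ.card + 1 := by
  rw [YoungDiagram.card, addC_cells h, Finset.card_insert_of_notMem h.1]

theorem subC_card {μ : YoungDiagram} {c : ℕ × ℕ} (h : IsRem μ c) :
    (subC μ c).card = μ.card - 1 := by
  rw [YoungDiagram.card, subC_cells h, Finset.card_erase_of_mem h.1]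

theorem isAdd_coord_le {μ : YoungDiagram} {c : ℕ × ℕ} (h : IsAdd μ c) :
    c.1 ≤ μ.card ∧ c.2 ≤ μ.card := by
  obtain ⟨h1, h2, h3⟩ := h
  constructor
  · rcases Nat.eq_zero_or_pos c.1 with h0 | hpos
    · omega
    · rcases h2 with h0 | h2
      · omega
      · have hsub : (Finset.range c.1) ×ˢ ({c.2} : Finset ℕ) ⊆ μ.cells := by
          intro x hx
          simp only [Finset.mem_product, Finset.mem_range, Finset.mem_singleton] at hx
          rw [YoungDiagram.mem_cells]
          have hx2 : x = (x.1, c.2) := by ext <;> simp [hx.2]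
          rw [hx2]
          exact μ.up_left_mem (by omega) (le_refl _) h2
        have := Finset.card_le_card hsub
        simpa using this
  · rcases Nat.eq_zero_or_pos c.2 with h0 | hpos
    · omega
    · rcases h3 with h0 | h3
      · omega
      · have hsub : ({c.1} : Finset ℕ) ×ˢ (Finset.range c.2) ⊆ μ.cells := by
          intro x hx
          simp only [Finset.mem_product, Finset.mem_range, Finset.mem_singleton] at hx
          rw [YoungDiagram.mem_cells]
          have hx2 : x = (c.1, x.2) := by ext <;> simp [hx.1]
          rw [hx2]
          exact μ.up_left_mem (le_refl _) (by omega) h3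
        have := Finset.card_le_card hsub
        simpa using this

/-- The finset of addable corners. -/
def addables (μ : YoungDiagram) : Finset (ℕ × ℕ) :=
  (Finset.range (μ.card + 1) ×ˢ Finset.range (μ.card + 1)).filter (IsAdd μ)

/-- The finset of removable corners. -/
def removables (μ : YoungDiagram) : Finset (ℕ × ℕ) :=
  μ.cells.filter (IsRem μ)

theorem mem_addables_iff {μ : YoungDiagram} {c : ℕ × ℕ} :
    c ∈ addables μ ↔ IsAdd μ c := by
  constructor
  · intro h; exact (Finset.mem_filter.mp h).2
  · intro h
    refine Finset.mem_filter.mpr ⟨?_, h⟩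
    have := isAdd_coord_le h
    simp only [Finset.mem_product, Finset.mem_range]
    omega

theorem mem_removables_iff {μ : YoungDiagram} {c : ℕ × ℕ} :
    c ∈ removables μ ↔ IsRem μ c := by
  constructor
  · intro h; exact (Finset.mem_filter.mp h).2
  · intro h; exact Finset.mem_filter.mpr ⟨h.1, h⟩


theorem mem_addC {μ : YoungDiagram} {a : ℕ × ℕ} (h : IsAdd μ a) {x : ℕ × ℕ} :
    x ∈ addC μ a ↔ x = a ∨ x ∈ μ := by
  rw [← YoungDiagram.mem_cells, addC_cells h, Finset.mem_insert]; rfl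

theorem mem_subC {μ : YoungDiagram} {r : ℕ × ℕ} (h : IsRem μ r) {x : ℕ × ℕ} :
    x ∈ subC μ r ↔ x ≠ r ∧ x ∈ μ := by
  rw [← YoungDiagram.mem_cells, subC_cells h, Finset.mem_erase]; rfl

theorem diag_rem {μ : YoungDiagram} {a : ℕ × ℕ} (h : IsAdd μ a) :
    IsRem (addC μ a) a ∧ subC (addC μ a) a = μ := by
  have hmem : a ∈ addC μ a := (mem_addC h).mpr (Or.inl rfl)
  have h2 : (a.1 + 1, a.2) ∉ addC μ a := by
    rw [mem_addC h]
    rintro (hc | hc)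
    · exact absurd (congrArg Prod.fst hc) (by simp)
    · exact h.1 (μ.up_left_mem (by omega) (le_refl _) hc)
  have h3 : (a.1, a.2 + 1) ∉ addC μ a := by
    rw [mem_addC h]
    rintro (hc | hc)
    · exact absurd (congrArg Prod.snd hc) (by simp)
    · exact h.1 (μ.up_left_mem (le_refl _) (by omega) hc)
  have hrem : IsRem (addC μ a) a := ⟨hmem, h2, h3⟩
  refine ⟨hrem, ?_⟩
  apply YoungDiagram.ext
  rw [subC_cells hrem, addC_cells h, Finset.erase_insert h.1]

theorem diag_add {μ : YoungDiagram} {r : ℕ × ℕ} (h : IsRem μ r) :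
    IsAdd (subC μ r) r ∧ addC (subC μ r) r = μ := by
  have h1 : r ∉ subC μ r := by rw [mem_subC h]; tauto
  have h2 : r.1 = 0 ∨ (r.1 - 1, r.2) ∈ subC μ r := by
    rcases Nat.eq_zero_or_pos r.1 with h0 | hpos
    · exact Or.inl h0
    · right
      rw [mem_subC h]
      constructor
      · intro hc; have := congrArg Prod.fst hc; simp at this; omega
      · exact μ.up_left_mem (by omega) (le_refl _) h.1
  have h3 : r.2 = 0 ∨ (r.1, r.2 - 1) ∈ subC μ r := by
    rcases Nat.eq_zero_or_pos r.2 with h0 | hpos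
    · exact Or.inl h0
    · right
      rw [mem_subC h]
      constructor
      · intro hc; have := congrArg Prod.snd hc; simp at this; omega
      · exact μ.up_left_mem (le_refl _) (by omega) h.1
  have hadd : IsAdd (subC μ r) r := ⟨h1, h2, h3⟩
  refine ⟨hadd, ?_⟩
  apply YoungDiagram.ext
  rw [addC_cells hadd, subC_cells h, Finset.insert_erase h.1]

theorem offdiag_fwd {μ : YoungDiagram} {a r : ℕ × ℕ} (ha : IsAdd μ a)
    (hr : IsRem (addC μ a) r) (hne : r ≠ a) :
    IsRem μ r ∧ IsAdd (subC μ r) a ∧ subC (addC μ a) r = addC (subC μ r) a := by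
  have hrmem : r ∈ μ := by
    rcases (mem_addC ha).mp hr.1 with hc | hc
    · exact absurd hc hne
    · exact hc
  have hrem : IsRem μ r := by
    refine ⟨hrmem, fun hc => hr.2.1 ((mem_addC ha).mpr (Or.inr hc)),
      fun hc => hr.2.2 ((mem_addC ha).mpr (Or.inr hc))⟩
  have hane : a ≠ r := fun hc => hne hc.symm
  have haa : IsAdd (subC μ r) a := by
    refine ⟨?_, ?_, ?_⟩
    · rw [mem_subC hrem]; exact fun hc => ha.1 hc.2
    · rcases ha.2.1 with h0 | hmem
      · exact Or.inl h0
      · right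
        rw [mem_subC hrem]
        refine ⟨?_, hmem⟩
        intro hc
        -- then r = (a.1-1, a.2), so (r.1+1, r.2) = a ∈ addC μ a, contradicting hr.2.1
        apply hr.2.1
        have ha1 : a.1 ≠ 0 := by
          intro h0
          have hh : (a.1 - 1, a.2) = a := by ext <;> simp [h0]
          rw [hh] at hc
          exact hane hc
        have : (r.1 + 1, r.2) = a := by
          rw [← hc]; ext <;> simp <;> omega
        rw [this]
        exact (mem_addC ha).mpr (Or.inl rfl)
    · rcases ha.2.2 with h0 | hmem
      · exact Or.inl h0
      · right
        rw [mem_subC hrem]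
        refine ⟨?_, hmem⟩
        intro hc
        apply hr.2.2
        have ha2 : a.2 ≠ 0 := by
          intro h0
          have hh : (a.1, a.2 - 1) = a := by ext <;> simp [h0]
          rw [hh] at hc
          exact hane hc
        have : (r.1, r.2 + 1) = a := by
          rw [← hc]; ext <;> simp <;> omega
        rw [this]
        exact (mem_addC ha).mpr (Or.inl rfl)
  refine ⟨hrem, haa, ?_⟩
  apply YoungDiagram.ext
  rw [subC_cells hr, addC_cells ha, addC_cells haa, subC_cells hrem,
    Finset.erase_insert_of_ne hne.symm]

theorem offdiag_bwd {μ : YoungDiagram} {r a : ℕ × ℕ} (hr : IsRem μ r)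
    (ha : IsAdd (subC μ r) a) (hne : a ≠ r) :
    IsAdd μ a ∧ IsRem (addC μ a) r ∧ subC (addC μ a) r = addC (subC μ r) a := by
  have hanotin : a ∉ μ := by
    intro hc
    exact ha.1 ((mem_subC hr).mpr ⟨hne, hc⟩)
  have haddμ : IsAdd μ a := by
    refine ⟨hanotin, ?_, ?_⟩
    · rcases ha.2.1 with h0 | hmem
      · exact Or.inl h0
      · exact Or.inr ((mem_subC hr).mp hmem).2
    · rcases ha.2.2 with h0 | hmem
      · exact Or.inl h0
      · exact Or.inr ((mem_subC hr).mp hmem).2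
  have hrema : IsRem (addC μ a) r := by
    refine ⟨(mem_addC haddμ).mpr (Or.inr hr.1), ?_, ?_⟩
    · rw [mem_addC haddμ]
      rintro (hc | hc)
      · -- a = (r.1+1, r.2): then (a.1-1, a.2) = r ∉ subC μ r, contradicting ha.2.1
        have ha1 : a.1 = r.1 + 1 := (congrArg Prod.fst hc).symm
        have ha2 : a.2 = r.2 := (congrArg Prod.snd hc).symm
        rcases ha.2.1 with h0 | hmem
        · omega
        · have : (a.1 - 1, a.2) = r := by ext <;> simp <;> omega
          rw [this] at hmem
          exact ((mem_subC hr).mp hmem).1 rfl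
      · exact hr.2.1 hc
    · rw [mem_addC haddμ]
      rintro (hc | hc)
      · have ha1 : a.1 = r.1 := (congrArg Prod.fst hc).symm
        have ha2 : a.2 = r.2 + 1 := (congrArg Prod.snd hc).symm
        rcases ha.2.2 with h0 | hmem
        · omega
        · have : (a.1, a.2 - 1) = r := by ext <;> simp <;> omega
          rw [this] at hmem
          exact ((mem_subC hr).mp hmem).1 rfl
      · exact hr.2.2 hc
  refine ⟨haddμ, hrema, ?_⟩
  apply YoungDiagram.ext
  rw [subC_cells hrema, addC_cells haddμ, addC_cells ha, subC_cells hr,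
    Finset.erase_insert_of_ne hne]

theorem isAdd_iff_rowLen {μ : YoungDiagram} {i j : ℕ} :
    IsAdd μ (i, j) ↔ j = μ.rowLen i ∧ (i = 0 ∨ μ.rowLen i < μ.rowLen (i - 1)) := by
  constructor
  · rintro ⟨h1, h2, h3⟩
    simp only [YoungDiagram.mem_iff_lt_rowLen] at h1 h2 h3
    push_neg at h1
    have hj : j = μ.rowLen i := by omega
    refine ⟨hj, ?_⟩
    rcases h2 with h0 | h2
    · exact Or.inl h0
    · right; omega
  · rintro ⟨hj, hi⟩
    refine ⟨?_, ?_, ?_⟩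
    · simp only [YoungDiagram.mem_iff_lt_rowLen]; omega
    · rcases hi with h0 | hi
      · exact Or.inl h0
      · right; simp only [YoungDiagram.mem_iff_lt_rowLen]; omega
    · rcases Nat.eq_zero_or_pos j with h0 | hpos
      · exact Or.inl h0
      · right; simp only [YoungDiagram.mem_iff_lt_rowLen]; omega

theorem isRem_iff_rowLen {μ : YoungDiagram} {i j : ℕ} :
    IsRem μ (i, j) ↔ j + 1 = μ.rowLen i ∧ μ.rowLen (i + 1) < μ.rowLen i := by
  constructor
  · rintro ⟨h1, h2, h3⟩
    simp only [YoungDiagram.mem_iff_lt_rowLen] at h1 h2 h3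
    push_neg at h2 h3
    omega
  · rintro ⟨hj, hi⟩
    refine ⟨?_, ?_, ?_⟩ <;> simp only [YoungDiagram.mem_iff_lt_rowLen] <;> omega

theorem addables_eq_insert (μ : YoungDiagram) :
    addables μ = insert (0, μ.rowLen 0)
      ((removables μ).image (fun c => (c.1 + 1, μ.rowLen (c.1 + 1)))) := by
  ext ⟨i, j⟩
  rw [mem_addables_iff, isAdd_iff_rowLen, Finset.mem_insert]
  constructor
  · rintro ⟨rfl, h0 | hd⟩
    · left; rw [h0]
    · right
      rw [Finset.mem_image]
      have hi0 : i ≠ 0 := by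
        intro h; rw [h] at hd; simp at hd
      have hii : i - 1 + 1 = i := by omega
      refine ⟨(i - 1, μ.rowLen (i - 1) - 1), ?_, ?_⟩
      · rw [mem_removables_iff, isRem_iff_rowLen, hii]
        omega
      · show (i - 1 + 1, μ.rowLen (i - 1 + 1)) = (i, μ.rowLen i)
        rw [hii]
  · rintro (hc | hc)
    · rw [Prod.ext_iff] at hc
      obtain ⟨h1, h2⟩ := hc
      simp only at h1 h2
      subst h1
      exact ⟨h2, Or.inl rfl⟩
    · rw [Finset.mem_image] at hc
      obtain ⟨⟨c1, c2⟩, hmem, heq⟩ := hc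
      rw [mem_removables_iff, isRem_iff_rowLen] at hmem
      simp only [Prod.mk.injEq] at heq
      obtain ⟨h1, h2⟩ := heq
      subst h1
      refine ⟨h2.symm, Or.inr ?_⟩
      rw [Nat.add_sub_cancel]
      omega

theorem card_addables (μ : YoungDiagram) :
    (addables μ).card = (removables μ).card + 1 := by
  rw [addables_eq_insert μ]
  have hnot : (0, μ.rowLen 0) ∉
      (removables μ).image (fun c => (c.1 + 1, μ.rowLen (c.1 + 1))) := by
    rw [Finset.mem_image]
    rintro ⟨c, hc, heq⟩
    have := congrArg Prod.fst heq
    simp at this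
  have hinj : Set.InjOn (fun c : ℕ × ℕ => (c.1 + 1, μ.rowLen (c.1 + 1)))
      (removables μ) := by
    rintro ⟨c1, c2⟩ hc ⟨d1, d2⟩ hd heq
    rw [Finset.mem_coe, mem_removables_iff, isRem_iff_rowLen] at hc hd
    simp only [Prod.mk.injEq] at heq ⊢
    obtain ⟨h1, h2⟩ := heq
    have he : c1 = d1 := by omega
    subst he
    exact ⟨rfl, by omega⟩
  rw [Finset.card_insert_of_notMem hnot, Finset.card_image_of_injOn hinj]


/-- Number of walks in Young's lattice following the word `w`
(`true` = add a cell, `false` = remove a cell) starting at `μ`. -/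
def W : List Bool → YoungDiagram → ℕ
  | [], _ => 1
  | true :: w, μ => ∑ c ∈ addables μ, W w (addC μ c)
  | false :: w, μ => ∑ c ∈ removables μ, W w (subC μ c)

@[simp] theorem W_nil (μ : YoungDiagram) : W [] μ = 1 := rfl

theorem W_true (w : List Bool) (μ : YoungDiagram) :
    W (true :: w) μ = ∑ c ∈ addables μ, W w (addC μ c) := rfl

theorem W_false (w : List Bool) (μ : YoungDiagram) :
    W (false :: w) μ = ∑ c ∈ removables μ, W w (subC μ c) := rfl

/-- `εU = εD + ε`: appending an up-step at the end. -/
theorem W_append_true (w : List Bool) :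
    ∀ μ : YoungDiagram, W (w ++ [true]) μ = W (w ++ [false]) μ + W w μ := by
  induction w with
  | nil =>
    intro μ
    simp only [List.nil_append]
    rw [W_true, W_false]
    simp only [W_nil, Finset.sum_const, smul_eq_mul, mul_one]
    rw [card_addables]
  | cons b w ih =>
    intro μ
    cases b
    · simp only [List.cons_append, W_false]
      rw [← Finset.sum_add_distrib]
      exact Finset.sum_congr rfl fun c _ => ih _
    · simp only [List.cons_append, W_true]
      rw [← Finset.sum_add_distrib]
      exact Finset.sum_congr rfl fun c _ => ih _

/-- The commutation `DU = UD + I` at the level of walk counts. -/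
theorem W_swap (w₁ w₂ : List Bool) :
    ∀ μ : YoungDiagram, W (w₁ ++ true :: false :: w₂) μ =
      W (w₁ ++ false :: true :: w₂) μ + W (w₁ ++ w₂) μ := by
  induction w₁ with
  | cons b w ih =>
    intro μ
    cases b
    · simp only [List.cons_append, W_false]
      rw [← Finset.sum_add_distrib]
      exact Finset.sum_congr rfl fun c _ => ih _
    · simp only [List.cons_append, W_true]
      rw [← Finset.sum_add_distrib]
      exact Finset.sum_congr rfl fun c _ => ih _
  | nil =>
    intro μ
    simp only [List.nil_append]
    rw [W_true, W_false]
    -- LHS : ∑ a ∈ addables μ, ∑ r ∈ removables (addC μ a), W w₂ (subC (addC μ a) r)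
    -- RHS : ∑ r ∈ removables μ, ∑ a ∈ addables (subC μ r), W w₂ (addC (subC μ r) a) + W w₂ μ
    have hL : ∀ a ∈ addables μ,
        W (false :: w₂) (addC μ a) =
          W w₂ μ + ∑ r ∈ (removables (addC μ a)).erase a, W w₂ (subC (addC μ a) r) := by
      intro a ha
      rw [mem_addables_iff] at ha
      rw [W_false]
      have hmem : a ∈ removables (addC μ a) := mem_removables_iff.mpr (diag_rem ha).1
      rw [← Finset.add_sum_erase _ _ hmem, (diag_rem ha).2]
    have hR : ∀ r ∈ removables μ,
        W (true :: w₂) (subC μ r) =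
          W w₂ μ + ∑ a ∈ (addables (subC μ r)).erase r, W w₂ (addC (subC μ r) a) := by
      intro r hr
      rw [mem_removables_iff] at hr
      rw [W_true]
      have hmem : r ∈ addables (subC μ r) := mem_addables_iff.mpr (diag_add hr).1
      rw [← Finset.add_sum_erase _ _ hmem, (diag_add hr).2]
    rw [Finset.sum_congr rfl hL, Finset.sum_congr rfl hR]
    rw [Finset.sum_add_distrib, Finset.sum_add_distrib]
    simp only [Finset.sum_const, smul_eq_mul]
    rw [card_addables]
    have hoff :
        (∑ a ∈ addables μ, ∑ r ∈ (removables (addC μ a)).erase a, W w₂ (subC (addC μ a) r)) =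
        (∑ r ∈ removables μ, ∑ a ∈ (addables (subC μ r)).erase r, W w₂ (addC (subC μ r) a)) := by
      rw [Finset.sum_sigma', Finset.sum_sigma']
      refine Finset.sum_nbij' (fun p => ⟨p.2, p.1⟩) (fun p => ⟨p.2, p.1⟩) ?_ ?_ ?_ ?_ ?_
      · rintro ⟨a, r⟩ hp
        simp only [Finset.mem_sigma, Finset.mem_erase] at hp ⊢
        obtain ⟨ha, hne, hr⟩ := hp
        rw [mem_addables_iff] at ha
        rw [mem_removables_iff] at hr
        obtain ⟨hrem, hadd, _⟩ := offdiag_fwd ha hr hne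
        exact ⟨mem_removables_iff.mpr hrem, fun h => hne h.symm, mem_addables_iff.mpr hadd⟩
      · rintro ⟨r, a⟩ hp
        simp only [Finset.mem_sigma, Finset.mem_erase] at hp ⊢
        obtain ⟨hr, hne, ha⟩ := hp
        rw [mem_removables_iff] at hr
        rw [mem_addables_iff] at ha
        obtain ⟨hadd, hrem, _⟩ := offdiag_bwd hr ha hne
        exact ⟨mem_addables_iff.mpr hadd, fun h => hne h.symm, mem_removables_iff.mpr hrem⟩
      · rintro ⟨a, r⟩ _; rfl
      · rintro ⟨r, a⟩ _; rfl
      · rintro ⟨a, r⟩ hp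
        simp only [Finset.mem_sigma, Finset.mem_erase] at hp
        obtain ⟨ha, hne, hr⟩ := hp
        rw [mem_addables_iff] at ha
        rw [mem_removables_iff] at hr
        obtain ⟨_, _, heq⟩ := offdiag_fwd ha hr hne
        rw [heq]
    rw [hoff]
    ring
  
/-- Moving a single down-step to the front of a block of up-steps. -/
theorem W_move_down :
    ∀ (i j : ℕ) (μ : YoungDiagram),
      W (List.replicate i true ++ false :: List.replicate j true) μ =
        W (false :: List.replicate (i + j) true) μ +
          i * W (List.replicate (i + j - 1) true) μ := by
  intro i
  induction i with
  | zero =>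
    intro j μ
    simp only [List.replicate, List.nil_append, Nat.zero_add, Nat.zero_mul, Nat.add_zero,
      zero_mul, add_zero]
  | succ i ih =>
    intro j μ
    have h1 : List.replicate (i+1) true ++ false :: List.replicate j true =
        List.replicate i true ++ true :: false :: List.replicate j true := by
      rw [List.replicate_succ']
      simp
    rw [h1, W_swap]
    have h2 : List.replicate i true ++ false :: List.replicate (j+1) true =
        List.replicate i true ++ false :: true :: List.replicate j true := by
      rw [List.replicate_succ]
    rw [← h2, ih (j+1)]
    have h3 : List.replicate i true ++ List.replicate j true = List.replicate (i + j) true := by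
      rw [← List.replicate_add]
    rw [h3]
    have h4 : i + (j + 1) = i + 1 + j := by omega
    have h5 : i + (j + 1) - 1 = i + j := by omega
    have h6 : i + 1 + j - 1 = i + j := by omega
    rw [h5, h4, h6]
    ring

/-- The key recurrence `E_{m+2}(μ) = E_{m+1}(μ) + E_{m+1}(Dμ) + (m+1) E_m(μ)`. -/
theorem W_rec (m : ℕ) (μ : YoungDiagram) :
    W (List.replicate (m + 2) true) μ =
      W (List.replicate (m + 1) true) μ +
        (∑ r ∈ removables μ, W (List.replicate (m + 1) true) (subC μ r)) +
        (m + 1) * W (List.replicate m true) μ := by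
  have h1 : List.replicate (m + 2) true = List.replicate (m + 1) true ++ [true] := by
    rw [← List.replicate_succ']
  have h2 : List.replicate (m + 1) true ++ [false] =
      List.replicate (m + 1) true ++ false :: List.replicate 0 true := rfl
  rw [h1, W_append_true, h2, W_move_down (m+1) 0]
  have h3 : W (false :: List.replicate (m + 1 + 0) true) μ =
      ∑ r ∈ removables μ, W (List.replicate (m + 1) true) (subC μ r) := by
    rw [W_false]
  rw [h3]
  have h4 : m + 1 + 0 - 1 = m := by omega
  rw [h4]
  ring

/-- `E 1 μ = |removables μ| + 1`. -/
theorem W_one (μ : YoungDiagram) :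
    W (List.replicate 1 true) μ = (removables μ).card + 1 := by
  have : List.replicate 1 true = [] ++ [true] := rfl
  rw [this, W_append_true]
  simp [W_false]


/-- The column diagram `(1^c)`. -/
def colD (c : ℕ) : YoungDiagram where
  cells := (Finset.range c) ×ˢ {0}
  isLowerSet := by
    intro x y hxy hx
    have h1 : y.1 ≤ x.1 := hxy.1
    have h2 : y.2 ≤ x.2 := hxy.2
    simp only [Finset.coe_product, Finset.coe_range, Set.mem_prod, Set.mem_Iio,
      Finset.coe_singleton, Set.mem_singleton_iff] at *
    omega

/-- The hook diagram `(2, 1^c)`. -/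
def hookD (c : ℕ) : YoungDiagram where
  cells := insert (0, 1) ((Finset.range (c + 1)) ×ˢ {0})
  isLowerSet := by
    intro x y hxy hx
    have h1 : y.1 ≤ x.1 := hxy.1
    have h2 : y.2 ≤ x.2 := hxy.2
    simp only [Finset.coe_insert, Set.mem_insert_iff, Finset.coe_product, Finset.coe_range,
      Set.mem_prod, Set.mem_Iio, Finset.coe_singleton, Set.mem_singleton_iff,
      Prod.ext_iff] at *
    omega

theorem mem_colD {c : ℕ} {x : ℕ × ℕ} : x ∈ colD c ↔ x.1 < c ∧ x.2 = 0 := by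
  cases x with
  | mk i j =>
    show (i, j) ∈ (Finset.range c) ×ˢ ({0} : Finset ℕ) ↔ _
    rw [Finset.mem_product, Finset.mem_range, Finset.mem_singleton]

theorem mem_hookD {c : ℕ} {x : ℕ × ℕ} :
    x ∈ hookD c ↔ x = (0, 1) ∨ (x.1 < c + 1 ∧ x.2 = 0) := by
  cases x with
  | mk i j =>
    show (i, j) ∈ insert (0, 1) ((Finset.range (c + 1)) ×ˢ ({0} : Finset ℕ)) ↔ _
    rw [Finset.mem_insert, Finset.mem_product, Finset.mem_range, Finset.mem_singleton]

theorem card_colD (c : ℕ) : (colD c).card = c := by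
  rw [YoungDiagram.card]
  show ((Finset.range c) ×ˢ ({0} : Finset ℕ)).card = c
  simp

theorem card_hookD (c : ℕ) : (hookD c).card = c + 2 := by
  rw [YoungDiagram.card]
  show (insert (0, 1) ((Finset.range (c + 1)) ×ˢ ({0} : Finset ℕ))).card = c + 2
  rw [Finset.card_insert_of_notMem (by simp)]
  simp

theorem removables_colD_zero : removables (colD 0) = ∅ := by
  ext x
  simp only [mem_removables_iff, Finset.notMem_empty, iff_false]
  intro h
  have := h.1
  rw [mem_colD] at this
  omega

theorem removables_colD (c : ℕ) : removables (colD (c + 1)) = {(c, 0)} := by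
  ext ⟨i, j⟩
  rw [mem_removables_iff, Finset.mem_singleton]
  constructor
  · rintro ⟨h1, h2, h3⟩
    rw [mem_colD] at h1 h2
    simp only [ne_eq, Prod.mk.injEq] at h1 h2 ⊢
    omega
  · rintro h
    simp only [Prod.mk.injEq] at h
    obtain ⟨rfl, rfl⟩ := h
    refine ⟨?_, ?_, ?_⟩ <;> rw [mem_colD] <;> simp

theorem subC_colD (c : ℕ) : subC (colD (c + 1)) (c, 0) = colD c := by
  have hrem : IsRem (colD (c + 1)) (c, 0) := by
    rw [← mem_removables_iff, removables_colD]; simp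
  apply YoungDiagram.ext
  rw [subC_cells hrem]
  ext ⟨i, j⟩
  rw [Finset.mem_erase]
  have e1 : ((i, j) ∈ (colD (c+1)).cells) ↔ (i < c + 1 ∧ j = 0) := mem_colD
  have e2 : ((i, j) ∈ (colD c).cells) ↔ (i < c ∧ j = 0) := mem_colD
  rw [e1, e2]
  simp only [ne_eq, Prod.mk.injEq]
  omega

theorem removables_hookD_zero : removables (hookD 0) = {(0, 1)} := by
  ext ⟨i, j⟩
  rw [mem_removables_iff, Finset.mem_singleton]
  constructor
  · rintro ⟨h1, h2, h3⟩
    rw [mem_hookD] at h1 h2 h3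
    simp only [Prod.mk.injEq] at h1 h2 h3 ⊢
    omega
  · rintro h
    simp only [Prod.mk.injEq] at h
    obtain ⟨rfl, rfl⟩ := h
    refine ⟨?_, ?_, ?_⟩ <;> rw [mem_hookD] <;> simp [Prod.ext_iff]

theorem removables_hookD (c : ℕ) :
    removables (hookD (c + 1)) = {(0, 1), (c + 1, 0)} := by
  ext ⟨i, j⟩
  rw [mem_removables_iff, Finset.mem_insert, Finset.mem_singleton]
  constructor
  · rintro ⟨h1, h2, h3⟩
    rw [mem_hookD] at h1 h2 h3
    simp only [Prod.mk.injEq] at h1 h2 h3 ⊢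
    omega
  · rintro (h | h) <;> simp only [Prod.mk.injEq] at h <;> obtain ⟨rfl, rfl⟩ := h
    · refine ⟨?_, ?_, ?_⟩ <;> rw [mem_hookD] <;> simp [Prod.ext_iff]
    · refine ⟨?_, ?_, ?_⟩ <;> rw [mem_hookD] <;> simp [Prod.ext_iff]

theorem subC_hookD_col (c : ℕ) : subC (hookD c) (0, 1) = colD (c + 1) := by
  have hrem : IsRem (hookD c) (0, 1) := by
    refine ⟨?_, ?_, ?_⟩ <;> rw [mem_hookD] <;> simp [Prod.ext_iff]
  apply YoungDiagram.ext
  rw [subC_cells hrem]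
  ext ⟨i, j⟩
  rw [Finset.mem_erase]
  have e1 : ((i, j) ∈ (hookD c).cells) ↔ ((i, j) = (0, 1) ∨ (i < c + 1 ∧ j = 0)) := mem_hookD
  have e2 : ((i, j) ∈ (colD (c + 1)).cells) ↔ (i < c + 1 ∧ j = 0) := mem_colD
  rw [e1, e2]
  simp only [ne_eq, Prod.mk.injEq]
  omega

theorem subC_hookD (c : ℕ) : subC (hookD (c + 1)) (c + 1, 0) = hookD c := by
  have hrem : IsRem (hookD (c + 1)) (c + 1, 0) := by
    rw [← mem_removables_iff, removables_hookD]; simp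
  apply YoungDiagram.ext
  rw [subC_cells hrem]
  ext ⟨i, j⟩
  rw [Finset.mem_erase]
  have e1 : ((i, j) ∈ (hookD (c + 1)).cells) ↔ ((i, j) = (0, 1) ∨ (i < c + 2 ∧ j = 0)) :=
    mem_hookD
  have e2 : ((i, j) ∈ (hookD c).cells) ↔ ((i, j) = (0, 1) ∨ (i < c + 1 ∧ j = 0)) := mem_hookD
  rw [e1, e2]
  simp only [ne_eq, Prod.mk.injEq]
  omega


theorem tInv_card (n : ℕ) :
    tInv n = Fintype.card {φ : Equiv.Perm (Fin n) // φ * φ = 1} :=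
  Nat.card_eq_fintype_card

theorem tInv_zero : tInv 0 = 1 := by
  rw [tInv_card]
  decide

theorem tInv_one : tInv 1 = 1 := by
  rw [tInv_card]
  decide

open Equiv Equiv.Perm in
/-- Involutions of `Fin (n+1)` fixing `0` correspond to involutions of `Fin n`. -/
def fixZeroEquiv (n : ℕ) :
    {φ : Perm (Fin (n + 1)) // φ * φ = 1 ∧ φ 0 = 0} ≃ {σ : Perm (Fin n) // σ * σ = 1} where
  toFun φ := ⟨(decomposeFin φ.1).2, by
    obtain ⟨φ, h1, h2⟩ := φ
    have hdec : φ = decomposeFin.symm (decomposeFin φ) := (decomposeFin.symm_apply_apply φ).symm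
    set p := (decomposeFin φ).1 with hp
    set σ := (decomposeFin φ).2 with hσ
    have hφ : φ = decomposeFin.symm (p, σ) := hdec
    have hp0 : p = 0 := by
      rw [hφ] at h2
      rwa [decomposeFin_symm_apply_zero] at h2
    rw [hp0] at hφ
    refine Equiv.ext fun x => ?_
    have happ : ∀ y : Fin n, φ y.succ = (σ y).succ := by
      intro y
      rw [hφ, decomposeFin_symm_apply_succ, swap_self]
      rfl
    have := Equiv.ext_iff.mp h1 x.succ
    rw [Perm.mul_apply, happ, happ] at this
    show σ (σ x) = x
    exact Fin.succ_injective _ this⟩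
  invFun σ := ⟨decomposeFin.symm (0, σ.1), by
    obtain ⟨σ, h1⟩ := σ
    have happ : ∀ y : Fin n, decomposeFin.symm ((0 : Fin (n+1)), σ) y.succ = (σ y).succ := by
      intro y
      rw [decomposeFin_symm_apply_succ, swap_self]
      rfl
    constructor
    · refine Equiv.ext fun x => ?_
      refine Fin.cases ?_ ?_ x
      · show decomposeFin.symm ((0 : Fin (n+1)), σ) (decomposeFin.symm ((0 : Fin (n+1)), σ) 0) = 0
        rw [decomposeFin_symm_apply_zero, decomposeFin_symm_apply_zero]
      · intro y
        show decomposeFin.symm ((0 : Fin (n+1)), σ)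
          (decomposeFin.symm ((0 : Fin (n+1)), σ) y.succ) = y.succ
        rw [happ, happ]
        have := Equiv.ext_iff.mp h1 y
        rw [Perm.mul_apply] at this
        rw [this]
        rfl
    · exact decomposeFin_symm_apply_zero 0 σ⟩
  left_inv := by
    rintro ⟨φ, h1, h2⟩
    apply Subtype.ext
    show decomposeFin.symm (0, (decomposeFin φ).2) = φ
    have hp0 : (decomposeFin φ).1 = 0 := by
      have : φ 0 = (decomposeFin φ).1 := by
        conv_lhs => rw [← decomposeFin.symm_apply_apply φ]
        rw [show decomposeFin.symm (decomposeFin φ) =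
          decomposeFin.symm ((decomposeFin φ).1, (decomposeFin φ).2) by rfl]
        rw [decomposeFin_symm_apply_zero]
      rw [← this, h2]
    rw [← hp0]
    rw [show ((decomposeFin φ).1, (decomposeFin φ).2) = decomposeFin φ by rfl]
    exact decomposeFin.symm_apply_apply φ
  right_inv := by
    rintro ⟨σ, h1⟩
    apply Subtype.ext
    show (decomposeFin (decomposeFin.symm (0, σ))).2 = σ
    rw [decomposeFin.apply_symm_apply]

open Equiv Equiv.Perm in
/-- Conjugation by `swap 0 q` carries involutions fixing `q` to involutions fixing `0`. -/
def conjSwapEquiv (n : ℕ) (q : Fin (n + 1)) :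
    {φ : Perm (Fin (n + 1)) // φ * φ = 1 ∧ φ q = q} ≃
      {φ : Perm (Fin (n + 1)) // φ * φ = 1 ∧ φ 0 = 0} where
  toFun φ := ⟨swap 0 q * φ.1 * swap 0 q, by
    obtain ⟨φ, h1, h2⟩ := φ
    constructor
    · have e1 : (swap 0 q * φ * swap 0 q) * (swap 0 q * φ * swap 0 q) =
        swap 0 q * φ * (swap 0 q * swap 0 q) * (φ * swap 0 q) := by group
      rw [e1, swap_mul_self, mul_one]
      have e2 : swap 0 q * φ * (φ * swap 0 q) = swap 0 q * (φ * φ) * swap 0 q := by group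
      rw [e2, h1, mul_one, swap_mul_self]
    · show (swap 0 q * φ * swap 0 q) 0 = 0
      rw [Perm.mul_apply, Perm.mul_apply, swap_apply_left, h2, swap_apply_right]⟩
  invFun φ := ⟨swap 0 q * φ.1 * swap 0 q, by
    obtain ⟨φ, h1, h2⟩ := φ
    constructor
    · have e1 : (swap 0 q * φ * swap 0 q) * (swap 0 q * φ * swap 0 q) =
        swap 0 q * φ * (swap 0 q * swap 0 q) * (φ * swap 0 q) := by group
      rw [e1, swap_mul_self, mul_one]
      have e2 : swap 0 q * φ * (φ * swap 0 q) = swap 0 q * (φ * φ) * swap 0 q := by group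
      rw [e2, h1, mul_one, swap_mul_self]
    · show (swap 0 q * φ * swap 0 q) q = q
      rw [Perm.mul_apply, Perm.mul_apply, swap_apply_right, h2, swap_apply_left]⟩
  left_inv := by
    rintro ⟨φ, h1, h2⟩
    apply Subtype.ext
    show swap 0 q * (swap 0 q * φ * swap 0 q) * swap 0 q = φ
    have e : swap 0 q * (swap 0 q * φ * swap 0 q) * swap 0 q =
      (swap 0 q * swap 0 q) * φ * (swap 0 q * swap 0 q) := by group
    rw [e, swap_mul_self, one_mul, mul_one]
  right_inv := by
    rintro ⟨φ, h1, h2⟩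
    apply Subtype.ext
    show swap 0 q * (swap 0 q * φ * swap 0 q) * swap 0 q = φ
    have e : swap 0 q * (swap 0 q * φ * swap 0 q) * swap 0 q =
      (swap 0 q * swap 0 q) * φ * (swap 0 q * swap 0 q) := by group
    rw [e, swap_mul_self, one_mul, mul_one]

open Equiv Equiv.Perm in
/-- Involutions of `Fin (n+1)` fixing an arbitrary point `q` correspond to involutions
of `Fin n`. -/
def fixPointEquiv (n : ℕ) (q : Fin (n + 1)) :
    {φ : Perm (Fin (n + 1)) // φ * φ = 1 ∧ φ q = q} ≃ {σ : Perm (Fin n) // σ * σ = 1} :=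
  (conjSwapEquiv n q).trans (fixZeroEquiv n)

open Equiv Equiv.Perm in
/-- Involutions of `Fin (n+2)` sending `0` to `q.succ ≠ 0` correspond to involutions of
`Fin (n+1)` fixing `q`. -/
def pairEquiv (n : ℕ) (q : Fin (n + 1)) :
    {φ : Perm (Fin (n + 2)) // φ * φ = 1 ∧ φ 0 = q.succ} ≃
      {σ : Perm (Fin (n + 1)) // σ * σ = 1 ∧ σ q = q} where
  toFun φ := ⟨(decomposeFin φ.1).2, by
    obtain ⟨φ, h1, h2⟩ := φ
    set σ := (decomposeFin φ).2 with hσ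
    have hp : (decomposeFin φ).1 = q.succ := by
      have : φ 0 = (decomposeFin φ).1 := by
        conv_lhs => rw [← decomposeFin.symm_apply_apply φ]
        rw [show decomposeFin.symm (decomposeFin φ) =
          decomposeFin.symm ((decomposeFin φ).1, (decomposeFin φ).2) by rfl]
        rw [decomposeFin_symm_apply_zero]
      rw [← this, h2]
    have hφ : φ = decomposeFin.symm (q.succ, σ) := by
      conv_lhs => rw [← decomposeFin.symm_apply_apply φ]
      rw [show decomposeFin φ = ((decomposeFin φ).1, (decomposeFin φ).2) by rfl, hp, ← hσ]
    have happ : ∀ y : Fin (n+1), φ y.succ = swap 0 q.succ (σ y).succ := fun y => by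
      rw [hφ, decomposeFin_symm_apply_succ]
    have hinv : ∀ x, φ (φ x) = x := fun x => by
      have := Equiv.ext_iff.mp h1 x
      rwa [Perm.mul_apply] at this
    -- σ q = q :
    have hσq : σ q = q := by
      have h3 : φ q.succ = 0 := by
        have := hinv 0
        rw [h2] at this
        exact this
      rw [happ] at h3
      rcases eq_or_ne (σ q) q with h | h
      · exact h
      · exfalso
        have hne1 : ((σ q).succ : Fin (n+2)) ≠ 0 := Fin.succ_ne_zero _
        have hne2 : ((σ q).succ : Fin (n+2)) ≠ q.succ := by
          intro hc
          exact h (Fin.succ_injective _ hc)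
        rw [swap_apply_of_ne_of_ne hne1 hne2] at h3
        exact hne1 h3
    refine ⟨?_, hσq⟩
    refine Equiv.ext fun x => ?_
    show σ (σ x) = x
    rcases eq_or_ne (σ x) q with h | h
    · -- then φ x.succ = 0, so x.succ = φ 0 = q.succ, x = q
      have h3 : φ x.succ = 0 := by
        rw [happ, h, swap_apply_right]
      have h4 : x.succ = q.succ := by
        have := hinv x.succ
        rw [h3, h2] at this
        exact this.symm
      have h5 : x = q := Fin.succ_injective _ h4
      rw [h5, hσq, hσq]
    · have h3 : φ x.succ = (σ x).succ := by
        rw [happ, swap_apply_of_ne_of_ne (Fin.succ_ne_zero _) ?_]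
        intro hc
        exact h (Fin.succ_injective _ hc)
      have h4 := hinv x.succ
      rw [h3, happ] at h4
      rcases eq_or_ne (σ (σ x)) q with h5 | h5
      · exfalso
        rw [h5, swap_apply_right] at h4
        exact Fin.succ_ne_zero x h4.symm
      · rw [swap_apply_of_ne_of_ne (Fin.succ_ne_zero _) ?_] at h4
        · exact Fin.succ_injective _ h4
        · intro hc
          exact h5 (Fin.succ_injective _ hc)⟩
  invFun σ := ⟨decomposeFin.symm (q.succ, σ.1), by
    obtain ⟨σ, h1, h2⟩ := σ
    have happ : ∀ y : Fin (n+1),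
        decomposeFin.symm (q.succ, σ) y.succ = swap 0 q.succ (σ y).succ := fun y => by
      rw [decomposeFin_symm_apply_succ]
    have hinvσ : ∀ x, σ (σ x) = x := fun x => by
      have := Equiv.ext_iff.mp h1 x
      rwa [Perm.mul_apply] at this
    refine ⟨?_, decomposeFin_symm_apply_zero _ _⟩
    refine Equiv.ext fun x => ?_
    show decomposeFin.symm (q.succ, σ) (decomposeFin.symm (q.succ, σ) x) = x
    refine Fin.cases ?_ ?_ x
    · rw [decomposeFin_symm_apply_zero, happ, h2, swap_apply_right]
    · intro y
      rw [happ]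
      rcases eq_or_ne (σ y) q with h | h
      · have hy : y = q := by rw [← hinvσ y, h, h2]
        rw [h, swap_apply_right, decomposeFin_symm_apply_zero, hy]
      · rw [swap_apply_of_ne_of_ne (Fin.succ_ne_zero _)
          (fun hc => h (Fin.succ_injective _ hc)), happ]
        rcases eq_or_ne (σ (σ y)) q with h5 | h5
        · exfalso
          have := hinvσ y
          rw [this] at h5
          rw [h5, h2] at h
          exact h rfl
        · rw [swap_apply_of_ne_of_ne (Fin.succ_ne_zero _)
            (fun hc => h5 (Fin.succ_injective _ hc)), hinvσ]⟩
  left_inv := by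
    rintro ⟨φ, h1, h2⟩
    apply Subtype.ext
    show decomposeFin.symm (q.succ, (decomposeFin φ).2) = φ
    have hp : (decomposeFin φ).1 = q.succ := by
      have : φ 0 = (decomposeFin φ).1 := by
        conv_lhs => rw [← decomposeFin.symm_apply_apply φ]
        rw [show decomposeFin.symm (decomposeFin φ) =
          decomposeFin.symm ((decomposeFin φ).1, (decomposeFin φ).2) by rfl]
        rw [decomposeFin_symm_apply_zero]
      rw [← this, h2]
    rw [← hp]
    rw [show ((decomposeFin φ).1, (decomposeFin φ).2) = decomposeFin φ by rfl]
    exact decomposeFin.symm_apply_apply φ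
  right_inv := by
    rintro ⟨σ, h1, h2⟩
    apply Subtype.ext
    show (decomposeFin (decomposeFin.symm (q.succ, σ))).2 = σ
    rw [decomposeFin.apply_symm_apply]

theorem tInv_rec (m : ℕ) : tInv (m + 2) = tInv (m + 1) + (m + 1) * tInv m := by
  classical
  rw [tInv_card]
  have key : Fintype.card {φ : Equiv.Perm (Fin (m + 2)) // φ * φ = 1} =
      ∑ p : Fin (m + 2), Fintype.card {φ : Equiv.Perm (Fin (m + 2)) // φ * φ = 1 ∧ φ 0 = p} := by
    rw [Fintype.card_subtype]
    rw [Finset.card_eq_sum_card_fiberwise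
      (f := fun φ : Equiv.Perm (Fin (m + 2)) => φ 0) (t := Finset.univ)
      (fun x _ => Finset.mem_univ _)]
    refine Finset.sum_congr rfl fun p _ => ?_
    rw [Fintype.card_subtype, Finset.filter_filter]
  rw [key, Fin.sum_univ_succ]
  have h0 : Fintype.card {φ : Equiv.Perm (Fin (m + 2)) // φ * φ = 1 ∧ φ 0 = 0} = tInv (m + 1) := by
    rw [Fintype.card_congr (fixZeroEquiv (m + 1)), tInv_card]
  have hs : ∀ q : Fin (m + 1),
      Fintype.card {φ : Equiv.Perm (Fin (m + 2)) // φ * φ = 1 ∧ φ 0 = q.succ} = tInv m := by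
    intro q
    rw [Fintype.card_congr ((pairEquiv m q).trans (fixPointEquiv m q)), tInv_card]
  rw [h0]
  rw [Finset.sum_congr rfl fun q _ => hs q]
  simp [mul_comm]


/-- Weighted sums `S r d m = ∑_{j<d} r j · C(m,j) · t_{m-j}`. -/
noncomputable def S (r : ℕ → ℕ) (d m : ℕ) : ℕ :=
  ∑ j ∈ Finset.range d, r j * (Nat.choose m j * tInv (m - j))

theorem tInv_sub_rec (m j : ℕ) :
    tInv (m + 2 - j) = tInv (m + 1 - j) + (m + 1 - j) * tInv (m - j) := by
  rcases Nat.lt_or_ge j (m + 1) with h | h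
  · have e1 : m + 2 - j = (m - j) + 2 := by omega
    have e2 : m + 1 - j = (m - j) + 1 := by omega
    rw [e1, e2, tInv_rec]
  · rcases Nat.eq_or_lt_of_le h with h' | h'
    · have e1 : m + 2 - j = 1 := by omega
      have e2 : m + 1 - j = 0 := by omega
      rw [e1, e2, tInv_zero, tInv_one]
      simp
    · have e1 : m + 2 - j = 0 := by omega
      have e2 : m + 1 - j = 0 := by omega
      rw [e1, e2]
      simp

theorem choose_mul_eq (m j : ℕ) :
    (m + 1 - j) * Nat.choose (m + 1) j = (m + 1) * Nat.choose m j := by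
  rcases Nat.lt_or_ge j (m + 1) with h | h
  · calc (m + 1 - j) * Nat.choose (m + 1) j
        = Nat.choose (m + 1) j * (m + 1 - j) := Nat.mul_comm _ _
      _ = Nat.choose (m + 1) (j + 1) * (j + 1) := (Nat.choose_succ_right_eq (m + 1) j).symm
      _ = Nat.succ m * Nat.choose m j := (Nat.add_one_mul_choose_eq m j).symm
  · have h1 : Nat.choose m j = 0 := Nat.choose_eq_zero_of_lt (by omega)
    have h2 : m + 1 - j = 0 := by omega
    rw [h1, h2, Nat.zero_mul, Nat.mul_zero]

/-- The master recurrence for the weighted sums, coming from Pascal's rule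
and the involution recurrence. -/
theorem S_rec (r : ℕ → ℕ) (d m : ℕ) :
    S r d (m + 2) =
      S r d (m + 1) + (m + 1) * S r d m + S (fun j => r (j + 1)) (d - 1) (m + 1) := by
  cases d with
  | zero => simp [S]
  | succ e =>
    have key : ∀ j, Nat.choose (m + 1) j * tInv (m + 2 - j) =
        Nat.choose (m + 1) j * tInv (m + 1 - j) + (m + 1) * (Nat.choose m j * tInv (m - j)) := by
      intro j
      rw [tInv_sub_rec m j, Nat.mul_add]
      congr 1
      rw [← Nat.mul_assoc, ← Nat.mul_assoc, Nat.mul_comm (Nat.choose (m+1) j) (m + 1 - j),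
        choose_mul_eq]
    have split : ∀ M : ℕ,
        (∑ j ∈ Finset.range (e + 1), r j * (Nat.choose (M + 1) j * tInv (M + 1 - j))) =
        (∑ j ∈ Finset.range e, r (j + 1) * (Nat.choose (M + 1) (j + 1) * tInv (M - j))) +
          r 0 * tInv (M + 1) := by
      intro M
      rw [Finset.sum_range_succ']
      congr 1
      · refine Finset.sum_congr rfl fun j _ => ?_
        have e2 : M + 1 - (j + 1) = M - j := by omega
        rw [e2]
      · simp
    show S r (e+1) (m+2) = _
    rw [S, split (m + 1)]
    have pasc : ∀ j, Nat.choose (m + 2) (j + 1) = Nat.choose (m + 1) j + Nat.choose (m+1) (j+1) :=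
      fun j => Nat.choose_succ_succ (m + 1) j
    have expand : (∑ j ∈ Finset.range e, r (j + 1) * (Nat.choose (m + 2) (j + 1) * tInv (m + 1 - j))) =
        (∑ j ∈ Finset.range e, r (j + 1) * (Nat.choose (m + 1) j * tInv (m + 1 - j))) +
          (∑ j ∈ Finset.range e, r (j + 1) * (Nat.choose (m + 1) (j + 1) * tInv (m + 1 - j))) := by
      rw [← Finset.sum_add_distrib]
      refine Finset.sum_congr rfl fun j _ => ?_
      rw [pasc j, Nat.add_mul, Nat.mul_add]
    rw [expand]
    have recomb : (∑ j ∈ Finset.range e, r (j + 1) * (Nat.choose (m + 1) (j + 1) * tInv (m + 1 - j))) +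
        r 0 * tInv (m + 2) =
        ∑ j ∈ Finset.range (e + 1), r j * (Nat.choose (m + 1) j * tInv (m + 2 - j)) := by
      rw [Finset.sum_range_succ']
      congr 1
      · refine Finset.sum_congr rfl fun j _ => ?_
        have e2 : m + 2 - (j + 1) = m + 1 - j := by omega
        rw [e2]
      · simp
    rw [add_assoc, recomb]
    have final : (∑ j ∈ Finset.range (e + 1), r j * (Nat.choose (m + 1) j * tInv (m + 2 - j))) =
        (∑ j ∈ Finset.range (e + 1), r j * (Nat.choose (m + 1) j * tInv (m + 1 - j))) +
          (m + 1) * (∑ j ∈ Finset.range (e + 1), r j * (Nat.choose m j * tInv (m - j))) := by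
      rw [Finset.mul_sum, ← Finset.sum_add_distrib]
      refine Finset.sum_congr rfl fun j _ => ?_
      rw [key j, Nat.mul_add]
      ring
    rw [final]
    show _ = S r (e+1) (m + 1) + (m + 1) * S r (e+1) m + S (fun j => r (j + 1)) (e + 1 - 1) (m + 1)
    rw [S, S, S]
    have e3 : e + 1 - 1 = e := by omega
    rw [e3]
    ring

/-- `A m c = ∑_{j≤c} C(m,j) t_{m-j}`. -/
noncomputable def Aar (m c : ℕ) : ℕ := S (fun _ => 1) (c + 1) m

/-- `B m c = ∑_{j≤c+2} min(j+1,c+1) C(m,j) t_{m-j}`. -/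
noncomputable def Bar (m c : ℕ) : ℕ := S (fun j => min (j + 1) (c + 1)) (c + 3) m

theorem Aar_rec0 (m : ℕ) : Aar (m + 2) 0 = Aar (m + 1) 0 + (m + 1) * Aar m 0 := by
  have h := S_rec (fun _ => 1) 1 m
  simpa [Aar, S] using h

theorem Aar_rec (m c : ℕ) :
    Aar (m + 2) (c + 1) = Aar (m + 1) (c + 1) + Aar (m + 1) c + (m + 1) * Aar m (c + 1) := by
  have h := S_rec (fun _ => 1) (c + 2) m
  have e : c + 2 - 1 = c + 1 := by omega
  rw [e] at h
  simp only [Aar]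
  rw [h]
  ring

theorem Bar_eq_Aar2 (m : ℕ) : Bar m 0 = Aar m 2 := by
  unfold Bar Aar S
  refine Finset.sum_congr rfl fun j _ => ?_
  beta_reduce
  have h : min (j + 1) (0 + 1) = 1 := by omega
  rw [h]

theorem Bar_rec0 (m : ℕ) :
    Bar (m + 2) 0 = Bar (m + 1) 0 + Aar (m + 1) 1 + (m + 1) * Bar m 0 := by
  rw [Bar_eq_Aar2, Bar_eq_Aar2, Bar_eq_Aar2]
  exact Aar_rec m 1

theorem Bar_rec (m c : ℕ) :
    Bar (m + 2) (c + 1) =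
      Bar (m + 1) (c + 1) + (Aar (m + 1) (c + 2) + Bar (m + 1) c) + (m + 1) * Bar m (c + 1) := by
  have h := S_rec (fun j => min (j + 1) (c + 1 + 1)) (c + 4) m
  have e : c + 4 - 1 = c + 3 := by omega
  rw [e] at h
  have h2 : S (fun j => min (j + 1 + 1) (c + 1 + 1)) (c + 3) (m + 1) =
      Aar (m + 1) (c + 2) + Bar (m + 1) c := by
    unfold Aar Bar S
    rw [← Finset.sum_add_distrib]
    refine Finset.sum_congr rfl fun j _ => ?_
    beta_reduce
    have hm : min (j + 1 + 1) (c + 1 + 1) = 1 + min (j + 1) (c + 1) := by omega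
    rw [hm, Nat.add_mul, Nat.one_mul]
  rw [h2] at h
  simp only [Bar, Aar] at h ⊢
  have hc : c + 1 + 3 = c + 4 := by omega
  rw [hc]
  rw [h]
  ring

theorem sum_small (f : ℕ → ℕ) (d : ℕ) (h2 : 2 ≤ d) (hf : ∀ j, 2 ≤ j → f j = 0) :
    ∑ j ∈ Finset.range d, f j = f 0 + f 1 := by
  rw [← Finset.sum_subset (Finset.range_subset_range.mpr h2)
    (fun x _ hx => hf x (by simp at hx; omega))]
  rw [Finset.sum_range_succ, Finset.sum_range_one]

theorem Aar_zero (c : ℕ) : Aar 0 c = 1 := by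
  unfold Aar S
  rcases Nat.eq_zero_or_pos c with rfl | hc
  · simp [tInv_zero]
  · rw [sum_small _ _ (by omega) ?_]
    · simp [tInv_zero]
    · intro j hj
      beta_reduce
      rw [Nat.choose_eq_zero_of_lt (by omega)]
      simp

theorem Bar_zero (c : ℕ) : Bar 0 c = 1 := by
  unfold Bar S
  rw [sum_small _ _ (by omega) ?_]
  · simp [tInv_zero]
  · intro j hj
    beta_reduce
    rw [Nat.choose_eq_zero_of_lt (by omega)]
    simp

theorem Aar_one_zero : Aar 1 0 = 1 := by
  unfold Aar S
  simp [tInv_one]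

theorem Aar_one (c : ℕ) : Aar 1 (c + 1) = 2 := by
  unfold Aar S
  rw [sum_small _ _ (by omega) ?_]
  · simp [tInv_one, tInv_zero]
  · intro j hj
    beta_reduce
    rw [Nat.choose_eq_zero_of_lt (by omega)]
    simp

theorem Bar_one_zero : Bar 1 0 = 2 := by
  rw [Bar_eq_Aar2]
  exact Aar_one 1

theorem Bar_one (c : ℕ) : Bar 1 (c + 1) = 3 := by
  unfold Bar S
  rw [sum_small _ _ (by omega) ?_]
  · have h0 : min (0 + 1) (c + 1 + 1) = 1 := by omega
    have h1 : min (1 + 1) (c + 1 + 1) = 2 := by omega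
    beta_reduce
    rw [h0, h1]
    simp [tInv_one, tInv_zero]
  · intro j hj
    beta_reduce
    rw [Nat.choose_eq_zero_of_lt (by omega)]
    simp


theorem main_col_hook (m : ℕ) :
    (∀ c, W (List.replicate m true) (colD c) = Aar m c) ∧
      (∀ c, W (List.replicate m true) (hookD c) = Bar m c) := by
  induction m using Nat.strong_induction_on with
  | _ m ih =>
    match m with
    | 0 =>
      constructor
      · intro c
        rw [show List.replicate 0 true = ([] : List Bool) from rfl, W_nil, Aar_zero]
      · intro c
        rw [show List.replicate 0 true = ([] : List Bool) from rfl, W_nil, Bar_zero]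
    | 1 =>
      constructor
      · intro c
        rw [W_one]
        cases c with
        | zero => rw [removables_colD_zero, Aar_one_zero]; simp
        | succ c => rw [removables_colD, Aar_one]; simp
      · intro c
        rw [W_one]
        cases c with
        | zero => rw [removables_hookD_zero, Bar_one_zero]; simp
        | succ c =>
          rw [removables_hookD, Bar_one]
          rw [Finset.card_insert_of_notMem (by simp [Prod.ext_iff]), Finset.card_singleton]
    | (m + 2) =>
      have ih1 := ih (m + 1) (by omega)
      have ih0 := ih m (by omega)
      constructor
      · intro c
        rw [W_rec]
        cases c with
        | zero =>
          rw [removables_colD_zero, Finset.sum_empty, ih1.1, ih0.1, Aar_rec0]; omega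
        | succ c =>
          rw [removables_colD, Finset.sum_singleton, subC_colD, ih1.1, ih1.1, ih0.1, Aar_rec]
      · intro c
        rw [W_rec]
        cases c with
        | zero =>
          rw [removables_hookD_zero, Finset.sum_singleton, subC_hookD_col, ih1.2, ih1.1, ih0.2,
            Bar_rec0]
        | succ c =>
          rw [removables_hookD, Finset.sum_insert (by simp [Prod.ext_iff]),
            Finset.sum_singleton, subC_hookD_col, subC_hookD, ih1.2, ih1.1, ih1.2, ih0.2, Bar_rec]


/-- `g` is an increasing chain of Young diagrams of length `m` starting at `μ`,
constant after time `m`. -/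
def IsChainUp (m : ℕ) (μ : YoungDiagram) (g : ℕ → YoungDiagram) : Prop :=
  g 0 = μ ∧ (∀ i, i < m → ∃ c, IsAdd (g i) c ∧ g (i + 1) = addC (g i) c) ∧
    ∀ i, m ≤ i → g i = g m

/-- The type of length-`m` up-chains from `μ`. -/
def Chainy (m : ℕ) (μ : YoungDiagram) : Type := {g : ℕ → YoungDiagram // IsChainUp m μ g}

def chain0Equiv (μ : YoungDiagram) : Chainy 0 μ ≃ Unit where
  toFun _ := Unit.unit
  invFun _ := ⟨fun _ => μ, rfl, fun i hi => by omega, fun i _ => rfl⟩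
  left_inv := by
    rintro ⟨g, h1, h2, h3⟩
    apply Subtype.ext
    funext i
    show μ = g i
    rw [h3 i (Nat.zero_le _), h1]
  right_inv := by intro u; rfl

/-- Prepending a first step to a chain. -/
def prependF (m : ℕ) (μ : YoungDiagram) :
    (Σ c : {c // c ∈ addables μ}, Chainy m (addC μ c.1)) → Chainy (m + 1) μ :=
  fun p => ⟨fun i => match i with
    | 0 => μ
    | (i + 1) => p.2.1 i, by
    obtain ⟨⟨c, hc⟩, g, hg1, hg2, hg3⟩ := p
    refine ⟨rfl, ?_, ?_⟩
    · intro i hi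
      match i with
      | 0 =>
        exact ⟨c, mem_addables_iff.mp hc, by simpa using hg1⟩
      | (i + 1) =>
        exact hg2 i (by omega)
    · intro i hi
      match i with
      | (i + 1) =>
        show g i = g m
        exact hg3 i (by omega)⟩

theorem prependF_bijective (m : ℕ) (μ : YoungDiagram) :
    Function.Bijective (prependF m μ) := by
  constructor
  · rintro ⟨⟨c, hc⟩, g⟩ ⟨⟨c', hc'⟩, g'⟩ heq
    have hfun := congrArg (fun x => x.1) heq
    simp only [prependF] at hfun
    have h1 : addC μ c = addC μ c' := by
      have h := congrFun hfun 1
      have e1 : (prependF m μ ⟨⟨c, hc⟩, g⟩).1 1 = g.1 0 := rfl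
      have e2 : (prependF m μ ⟨⟨c', hc'⟩, g'⟩).1 1 = g'.1 0 := rfl
      calc addC μ c = g.1 0 := g.2.1.symm
        _ = g'.1 0 := h
        _ = addC μ c' := g'.2.1
    have hcc : c = c' := by
      have hadd : IsAdd μ c := mem_addables_iff.mp hc
      have hadd' : IsAdd μ c' := mem_addables_iff.mp hc'
      have hcells := congrArg YoungDiagram.cells h1
      rw [addC_cells hadd, addC_cells hadd'] at hcells
      have : c ∈ insert c' μ.cells := by
        rw [← hcells]; exact Finset.mem_insert_self _ _
      rcases Finset.mem_insert.mp this with h | h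
      · exact h
      · exact absurd h hadd.1
    subst hcc
    have h2 : g = g' := by
      apply Subtype.ext
      funext i
      exact congrFun hfun (i + 1)
    rw [h2]
  · rintro ⟨g, hg1, hg2, hg3⟩
    obtain ⟨c, hc, hstep⟩ := hg2 0 (by omega)
    rw [hg1] at hc hstep
    refine ⟨⟨⟨c, mem_addables_iff.mpr hc⟩, ⟨fun i => g (i + 1), ?_, ?_, ?_⟩⟩, ?_⟩
    · exact hstep.symm ▸ rfl
    · intro i hi
      exact hg2 (i + 1) (by omega)
    · intro i hi
      exact hg3 (i + 1) (by omega)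
    · apply Subtype.ext
      funext i
      match i with
      | 0 => exact hg1.symm
      | (i + 1) => rfl

theorem chainy_finite : ∀ (m : ℕ) (μ : YoungDiagram), Finite (Chainy m μ) := by
  intro m
  induction m with
  | zero => intro μ; exact Finite.of_equiv _ (chain0Equiv μ).symm
  | succ m ih =>
    intro μ
    haveI : ∀ c : {c // c ∈ addables μ}, Finite (Chainy m (addC μ c.1)) := fun c => ih _
    exact Finite.of_surjective (prependF m μ) (prependF_bijective m μ).2

theorem chainy_card : ∀ (m : ℕ) (μ : YoungDiagram),
    Nat.card (Chainy m μ) = W (List.replicate m true) μ := by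
  intro m
  induction m with
  | zero =>
    intro μ
    rw [Nat.card_congr (chain0Equiv μ), Nat.card_unique]
    exact (W_nil μ).symm
  | succ m ih =>
    intro μ
    rw [← Nat.card_eq_of_bijective _ (prependF_bijective m μ)]
    haveI : ∀ c : {c // c ∈ addables μ}, Fintype (Chainy m (addC μ c.1)) :=
      fun c => @Fintype.ofFinite _ (chainy_finite m _)
    rw [Nat.card_eq_fintype_card, Fintype.card_sigma]
    have : ∀ c : {c // c ∈ addables μ}, Fintype.card (Chainy m (addC μ c.1)) =
        W (List.replicate m true) (addC μ c.1) := by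
      intro c
      rw [← Nat.card_eq_fintype_card, ih]
    rw [Finset.sum_congr rfl fun c _ => this c]
    rw [show List.replicate (m+1) true = true :: List.replicate m true from rfl, W_true]
    exact Finset.sum_coe_sort (addables μ) (fun c => W (List.replicate m true) (addC μ c))


theorem SYT_ext {n : ℕ} {T U : SYT n} (h : T.chain = U.chain) : T = U := by
  cases T; cases U
  simp only at h
  subst h
  rfl

/-- A diagram not containing `(0,1)` is a column. -/
theorem col_forced (d : YoungDiagram) (h : (0, 1) ∉ d) : d = colD d.card := by
  have hcol : ∀ x : ℕ × ℕ, x ∈ d → x.2 = 0 := by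
    intro x hx
    by_contra hc
    exact h (d.up_left_mem (Nat.zero_le _) (by omega) hx)
  have hcells : d.cells = d.col 0 := by
    ext x
    rw [YoungDiagram.mem_col_iff]
    constructor
    · intro hx; exact ⟨hx, hcol x hx⟩
    · intro hx; exact hx.1
  have hcard : d.card = d.colLen 0 := by
    rw [YoungDiagram.colLen_eq_card, ← hcells]
  apply YoungDiagram.ext
  ext ⟨i, j⟩
  have e1 : ((i, j) ∈ d.cells) ↔ (i, j) ∈ d := Iff.rfl
  have e2 : ((i, j) ∈ (colD d.card).cells) ↔ (i < d.card ∧ j = 0) := mem_colD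
  rw [e1, e2]
  constructor
  · intro hx
    have hj := hcol _ hx
    simp only at hj
    subst hj
    rw [YoungDiagram.mem_iff_lt_colLen] at hx
    exact ⟨by omega, rfl⟩
  · rintro ⟨hi, rfl⟩
    rw [YoungDiagram.mem_iff_lt_colLen]
    omega

theorem insert_of_diff {s t : Finset (ℕ × ℕ)} {a : ℕ × ℕ} (hsub : s ⊆ t)
    (hcard : t.card = s.card + 1) (hat : a ∈ t) (has : a ∉ s) : t = insert a s := by
  apply (Finset.eq_of_subset_of_card_le ?_ ?_).symm
  · intro x hx
    rcases Finset.mem_insert.mp hx with rfl | hx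
    · exact hat
    · exact hsub hx
  · rw [Finset.card_insert_of_notMem has, hcard]

/-- A single-box step of diagrams is adding an addable corner. -/
theorem stepUp_of {μ ν : YoungDiagram} (hle : μ ≤ ν) (hcard : ν.card = μ.card + 1) :
    ∃ c, IsAdd μ c ∧ ν = addC μ c := by
  have hsub : μ.cells ⊆ ν.cells := hle
  have hdiff : (ν.cells \ μ.cells).card = 1 := by
    rw [Finset.card_sdiff_of_subset hsub]
    rw [YoungDiagram.card] at hcard
    rw [YoungDiagram.card] at hcard
    omega
  obtain ⟨a, ha⟩ := Finset.card_eq_one.mp hdiff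
  have hat : a ∈ ν.cells := by
    have : a ∈ ν.cells \ μ.cells := ha ▸ Finset.mem_singleton_self a
    exact (Finset.mem_sdiff.mp this).1
  have has : a ∉ μ.cells := by
    have : a ∈ ν.cells \ μ.cells := ha ▸ Finset.mem_singleton_self a
    exact (Finset.mem_sdiff.mp this).2
  have hcells : ν.cells = insert a μ.cells := insert_of_diff hsub hcard hat has
  have hadd : IsAdd μ a := by
    refine ⟨has, ?_, ?_⟩
    · rcases Nat.eq_zero_or_pos a.1 with h0 | hpos
      · exact Or.inl h0
      · right
        have hmem : (a.1 - 1, a.2) ∈ ν := ν.up_left_mem (by omega) (le_refl _) hat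
        have : (a.1 - 1, a.2) ∈ insert a μ.cells := hcells ▸ hmem
        rcases Finset.mem_insert.mp this with hc | hc
        · exfalso
          have := congrArg Prod.fst hc
          simp only at this
          omega
        · exact hc
    · rcases Nat.eq_zero_or_pos a.2 with h0 | hpos
      · exact Or.inl h0
      · right
        have hmem : (a.1, a.2 - 1) ∈ ν := ν.up_left_mem (le_refl _) (by omega) hat
        have : (a.1, a.2 - 1) ∈ insert a μ.cells := hcells ▸ hmem
        rcases Finset.mem_insert.mp this with hc | hc
        · exfalso
          have := congrArg Prod.snd hc
          simp only at this
          omega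
        · exact hc
  refine ⟨a, hadd, ?_⟩
  apply YoungDiagram.ext
  rw [addC_cells hadd, hcells]

theorem le_addC {μ : YoungDiagram} {c : ℕ × ℕ} (h : IsAdd μ c) : μ ≤ addC μ c := by
  intro x hx
  show x ∈ (addC μ c).cells
  rw [addC_cells h]
  exact Finset.mem_insert_of_mem hx

section Equivalence

variable {n k : ℕ}

/-- In an SYT of the counted family, `chain (k-1)` is a column and `chain k` is a hook. -/
theorem chain_km1_eq (T : SYT n) (hmem : (0, 1) ∉ T.chain (k - 1)) (hj : k - 1 ≤ n) :
    T.chain (k - 1) = colD (k - 1) := by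
  have := col_forced (T.chain (k - 1)) hmem
  rwa [T.card_eq (k - 1) hj] at this

theorem chain_k_eq (hk : 2 ≤ k) (hkn : k ≤ n) (T : SYT n) (h1 : (0, 1) ∈ T.chain k)
    (h2 : (0, 1) ∉ T.chain (k - 1)) :
    T.chain k = hookD (k - 2) := by
  have hcol : T.chain (k - 1) = colD (k - 1) := chain_km1_eq T h2 (by omega)
  have hle : T.chain (k - 1) ≤ T.chain k := T.mono (by omega)
  have hcards : (T.chain k).card = (T.chain (k - 1)).card + 1 := by
    rw [T.card_eq k hkn, T.card_eq (k - 1) (by omega)]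
    omega
  have hcells : (T.chain k).cells = insert (0, 1) (T.chain (k - 1)).cells :=
    insert_of_diff hle hcards h1 h2
  apply YoungDiagram.ext
  rw [hcells, hcol]
  ext ⟨i, j⟩
  rw [Finset.mem_insert]
  have e1 : ((i, j) ∈ (colD (k - 1)).cells) ↔ (i < k - 1 ∧ j = 0) := mem_colD
  have e2 : ((i, j) ∈ (hookD (k - 2)).cells) ↔ ((i, j) = (0, 1) ∨ (i < k - 2 + 1 ∧ j = 0)) :=
    mem_hookD
  rw [e1, e2]
  have : k - 2 + 1 = k - 1 := by omega
  rw [this]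

/-- Columns are forced below `k`. -/
theorem chain_below (hkn : k ≤ n) (T : SYT n) (h2 : (0, 1) ∉ T.chain (k - 1)) (j : ℕ)
    (hj : j ≤ k - 1) :
    T.chain j = colD j := by
  have hmem : (0, 1) ∉ T.chain j := by
    intro hc
    exact h2 (T.mono hj hc)
  have := col_forced (T.chain j) hmem
  rwa [T.card_eq j (by omega)] at this

/-- The equivalence between the counted SYT and up-chains from the hook. -/
noncomputable def sytChainEquiv (hk : 2 ≤ k) (hn : 2 * k ≤ n) :
    {T : SYT n // (0, 1) ∈ T.chain k ∧ (0, 1) ∉ T.chain (k - 1)} ≃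
      Chainy (n - k) (hookD (k - 2)) where
  toFun T := ⟨fun i => T.1.chain (k + i), by
    obtain ⟨T, h1, h2⟩ := T
    refine ⟨?_, ?_, ?_⟩
    · show T.chain (k + 0) = hookD (k - 2)
      rw [Nat.add_zero]
      exact chain_k_eq hk (by omega) T h1 h2
    · intro i hi
      have hle : T.chain (k + i) ≤ T.chain (k + i + 1) := T.mono (by omega)
      have hcard : (T.chain (k + i + 1)).card = (T.chain (k + i)).card + 1 := by
        rw [T.card_eq (k + i + 1) (by omega), T.card_eq (k + i) (by omega)]
      exact stepUp_of hle hcard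
    · intro i hi
      have e1 : T.chain (k + i) = T.chain n := T.stable (k + i) (by omega)
      have e2 : T.chain (k + (n - k)) = T.chain n := by
        congr 1
        omega
      show T.chain (k + i) = T.chain (k + (n - k))
      rw [e1, e2]⟩
  invFun g := ⟨⟨fun j => if j < k then colD j else g.1 (j - k), by
      -- monotone
      apply monotone_nat_of_le_succ
      intro j
      rcases Nat.lt_or_ge (j + 1) k with hj | hj
      · rw [if_pos (by omega), if_pos hj]
        intro x hx
        have hx' := mem_colD.mp hx
        show x ∈ (colD (j + 1)).cells
        rw [YoungDiagram.mem_cells, mem_colD]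
        omega
      · rcases Nat.lt_or_ge j k with hj' | hj'
        · -- j = k - 1 : colD (k-1) ≤ g 0 = hook
          have hjeq : j = k - 1 := by omega
          rw [if_pos hj', if_neg (by omega)]
          have hz : j + 1 - k = 0 := by omega
          rw [hz, g.2.1, hjeq]
          intro x hx
          have hx' := mem_colD.mp hx
          show x ∈ (hookD (k - 2)).cells
          rw [YoungDiagram.mem_cells, mem_hookD]
          right
          omega
        · rw [if_neg (by omega), if_neg (by omega)]
          rcases Nat.lt_or_ge (j - k) (n - k) with hlt | hge
          · obtain ⟨c, hc, hstep⟩ := g.2.2.1 (j - k) hlt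
            have he : j + 1 - k = (j - k) + 1 := by omega
            rw [he, hstep]
            exact le_addC hc
          · have e1 : g.1 (j - k) = g.1 (n - k) := g.2.2.2 (j - k) hge
            have e2 : g.1 (j + 1 - k) = g.1 (n - k) := g.2.2.2 (j + 1 - k) (by omega)
            rw [e1, e2], by
      -- card_eq
      have hcard : ∀ i, i ≤ n - k → (g.1 i).card = k + i := by
        intro i
        induction i with
        | zero =>
          intro _
          rw [g.2.1, card_hookD]
          omega
        | succ i ih =>
          intro hi
          obtain ⟨c, hc, hstep⟩ := g.2.2.1 i (by omega)
          rw [hstep, addC_card hc, ih (by omega)]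
          omega
      intro j hj
      show (if j < k then colD j else g.1 (j - k)).card = j
      rcases Nat.lt_or_ge j k with hjk | hjk
      · rw [if_pos hjk, card_colD]
      · rw [if_neg (by omega), hcard (j - k) (by omega)]
        omega, by
      -- stable
      intro j hj
      show (if j < k then colD j else g.1 (j - k)) = (if n < k then colD n else g.1 (n - k))
      rw [if_neg (by omega), if_neg (by omega)]
      exact g.2.2.2 (j - k) (by omega)⟩, by
      -- (0,1) ∈ chain k
      show (0, 1) ∈ (if k < k then colD k else g.1 (k - k))
      rw [if_neg (by omega)]
      have hz : k - k = 0 := by omega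
      rw [hz, g.2.1, mem_hookD]
      left
      rfl, by
      -- (0,1) ∉ chain (k-1)
      show (0, 1) ∉ (if k - 1 < k then colD (k - 1) else g.1 (k - 1 - k))
      rw [if_pos (by omega)]
      intro hc
      have := mem_colD.mp hc
      omega⟩
  left_inv := by
    rintro ⟨T, h1, h2⟩
    apply Subtype.ext
    apply SYT_ext
    funext j
    show (if j < k then colD j else T.chain (k + (j - k))) = T.chain j
    rcases Nat.lt_or_ge j k with hj | hj
    · rw [if_pos hj]
      exact (chain_below (by omega) T h2 j (by omega)).symm
    · rw [if_neg (by omega)]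
      congr 1
      omega
  right_inv := by
    intro g
    apply Subtype.ext
    funext i
    show (if k + i < k then colD (k + i) else g.1 (k + i - k)) = g.1 i
    rw [if_neg (by omega)]
    have he : k + i - k = i := by omega
    rw [he]

end Equivalence


theorem f12_eq_Bar (n k : ℕ) (hk : 2 ≤ k) (hn : 2 * k ≤ n) :
    f12 n k = Bar (n - k) (k - 2) := by
  rw [f12, Nat.card_congr (sytChainEquiv hk hn), chainy_card, (main_col_hook (n - k)).2]

theorem term_rec (m i : ℕ) (h : i + 1 ≤ m) :
    Nat.choose m i * tInv (m - i + 1) =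
      Nat.choose m i * tInv (m - i) + (i + 1) * (Nat.choose m (i + 1) * tInv (m - (i + 1))) := by
  have e1 : m - i + 1 = (m - (i + 1)) + 2 := by omega
  have e2 : m - i = (m - (i + 1)) + 1 := by omega
  rw [e1, e2, tInv_rec, Nat.mul_add]
  congr 1
  have e3 : m - (i + 1) + 1 = m - i := by omega
  calc Nat.choose m i * ((m - (i + 1) + 1) * tInv (m - (i + 1)))
      = (Nat.choose m i * (m - i)) * tInv (m - (i + 1)) := by rw [e3]; ring
    _ = (Nat.choose m (i + 1) * (i + 1)) * tInv (m - (i + 1)) := by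
        rw [Nat.choose_succ_right_eq]
    _ = (i + 1) * (Nat.choose m (i + 1) * tInv (m - (i + 1))) := by ring

theorem bridge (m K : ℕ) (hm : K + 2 ≤ m) :
    Bar m K + Nat.choose m (K + 1) * tInv (m - (K + 1)) +
        Nat.choose m (K + 2) * tInv (m - (K + 2)) =
      ∑ i ∈ Finset.range (K + 2), Nat.choose m i * tInv (m - i + 1) := by
  set P := Nat.choose m (K + 1) * tInv (m - (K + 1)) with hP
  set Q := Nat.choose m (K + 2) * tInv (m - (K + 2)) with hQ
  -- Step 1: RHS + Q = TOT := ∑_{i<K+3} (1+i) * (C(m,i) * t(m-i))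
  have step1 : (∑ i ∈ Finset.range (K + 2), Nat.choose m i * tInv (m - i + 1)) + Q =
      ∑ i ∈ Finset.range (K + 3), (1 + i) * (Nat.choose m i * tInv (m - i)) := by
    have expand : (∑ i ∈ Finset.range (K + 2), Nat.choose m i * tInv (m - i + 1)) =
        (∑ i ∈ Finset.range (K + 2), Nat.choose m i * tInv (m - i)) +
          (∑ i ∈ Finset.range (K + 2), (i + 1) * (Nat.choose m (i + 1) * tInv (m - (i + 1)))) := by
      rw [← Finset.sum_add_distrib]
      exact Finset.sum_congr rfl fun i hi =>
        term_rec m i (by have := Finset.mem_range.mp hi; omega)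
    rw [expand]
    have reindex : (∑ i ∈ Finset.range (K + 2), (i + 1) * (Nat.choose m (i + 1) * tInv (m - (i + 1)))) =
        ∑ i ∈ Finset.range (K + 3), i * (Nat.choose m i * tInv (m - i)) := by
      rw [Finset.sum_range_succ' (fun i => i * (Nat.choose m i * tInv (m - i))) (K + 2)]
      simp
    rw [reindex]
    have last : (∑ i ∈ Finset.range (K + 3), Nat.choose m i * tInv (m - i)) =
        (∑ i ∈ Finset.range (K + 2), Nat.choose m i * tInv (m - i)) + Q :=
      Finset.sum_range_succ _ _
    have tot : ∀ i, (1 + i) * (Nat.choose m i * tInv (m - i)) =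
        Nat.choose m i * tInv (m - i) + i * (Nat.choose m i * tInv (m - i)) := by
      intro i; ring
    rw [Finset.sum_congr rfl fun i _ => tot i, Finset.sum_add_distrib]
    omega
  -- Step 2: TOT = Bar m K + P + 2 * Q
  have step2 : (∑ i ∈ Finset.range (K + 3), (1 + i) * (Nat.choose m i * tInv (m - i))) =
      Bar m K + P + 2 * Q := by
    have ebar : Bar m K = (∑ i ∈ Finset.range (K + 1),
        (i + 1) * (Nat.choose m i * tInv (m - i))) + (K + 1) * P + (K + 1) * Q := by
      unfold Bar S
      rw [show K + 3 = (K + 1) + 1 + 1 from rfl, Finset.sum_range_succ, Finset.sum_range_succ]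
      have c1 : min (K + 1 + 1) (K + 1) = K + 1 := by omega
      have c2 : min (K + 2 + 1) (K + 1) = K + 1 := by omega
      beta_reduce
      rw [c1, c2]
      have he1 : m - (K + 1 + 1) = m - (K + 2) := by omega
      rw [he1, ← hP, ← hQ]
      congr 2
      · refine Finset.sum_congr rfl fun i hi => ?_
        have hi' := Finset.mem_range.mp hi
        have hmin : min (i + 1) (K + 1) = i + 1 := by omega
        rw [hmin]
    have etot : (∑ i ∈ Finset.range (K + 3), (1 + i) * (Nat.choose m i * tInv (m - i))) =
        (∑ i ∈ Finset.range (K + 1),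
          (1 + i) * (Nat.choose m i * tInv (m - i))) + (K + 2) * P + (K + 3) * Q := by
      rw [show K + 3 = (K + 1) + 1 + 1 from rfl, Finset.sum_range_succ, Finset.sum_range_succ,
        ← hP, ← hQ]
      ring
    rw [etot, ebar]
    have : ∀ i, (1 + i) = (i + 1) := fun i => by omega
    rw [Finset.sum_congr rfl fun i _ => by rw [this i]]
    ring
  omega

theorem f12_explicit_aux (n k : ℕ) (hk : 2 ≤ k) (hn : 2 * k ≤ n) :
    (f12 n k : ℤ) =
      (∑ j ∈ Finset.range k,
        (Nat.choose (n - k) (k - j - 1) * tInv (n - 2 * k + j + 2) : ℤ)) -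
      (Nat.choose (n - k) (k - 1) * tInv (n - 2 * k + 1) : ℤ) -
      (Nat.choose (n - k) k * tInv (n - 2 * k) : ℤ) := by
  obtain ⟨K, rfl⟩ : ∃ K, k = K + 2 := ⟨k - 2, by omega⟩
  set m := n - (K + 2) with hm
  have hmk : K + 2 ≤ m := by omega
  -- the ℕ-level sum identity
  have reflect : (∑ j ∈ Finset.range (K + 2),
      Nat.choose m (K + 2 - j - 1) * tInv (n - 2 * (K + 2) + j + 2)) =
      ∑ i ∈ Finset.range (K + 2), Nat.choose m i * tInv (m - i + 1) := by
    rw [← Finset.sum_range_reflect (fun i => Nat.choose m i * tInv (m - i + 1)) (K + 2)]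
    refine Finset.sum_congr rfl fun j hj => ?_
    have hj' := Finset.mem_range.mp hj
    have e1 : K + 2 - j - 1 = K + 2 - 1 - j := by omega
    have e2 : n - 2 * (K + 2) + j + 2 = m - (K + 2 - 1 - j) + 1 := by omega
    rw [e1, e2]
  have key : f12 n (K + 2) + Nat.choose m (K + 1) * tInv (m - (K + 1)) +
      Nat.choose m (K + 2) * tInv (m - (K + 2)) =
      ∑ j ∈ Finset.range (K + 2),
        Nat.choose m (K + 2 - j - 1) * tInv (n - 2 * (K + 2) + j + 2) := by
    rw [f12_eq_Bar n (K + 2) hk hn, reflect]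
    have : K + 2 - 2 = K := by omega
    rw [this]
    exact bridge m K hmk
  have e3 : n - 2 * (K + 2) + 1 = m - (K + 1) := by omega
  have e4 : n - 2 * (K + 2) = m - (K + 2) := by omega
  have e5 : K + 2 - 1 = K + 1 := by omega
  rw [← e3, ← e4] at key
  rw [e5]
  have keyZ := congrArg (fun x : ℕ => (x : ℤ)) key
  push_cast at keyZ
  push_cast
  linarith [keyZ]

end SYTproof

/-- For `2 ≤ k` and `n ≥ 2k`,
`f(n,k) = Σ_{j=0}^{k−1} C(n−k, k−j−1)·t_{n−2k+j+2} − C(n−k, k−1)·t_{n−2k+1}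
          − C(n−k, k)·t_{n−2k}`. -/
theorem f12_explicit (n k : ℕ) (hk : 2 ≤ k) (hn : 2 * k ≤ n) :
    (f12 n k : ℤ) =
      (∑ j ∈ Finset.range k,
        (Nat.choose (n - k) (k - j - 1) * tInv (n - 2 * k + j + 2) : ℤ)) -
      (Nat.choose (n - k) (k - 1) * tInv (n - 2 * k + 1) : ℤ) -
      (Nat.choose (n - k) k * tInv (n - 2 * k) : ℤ) := by
  exact SYTproof.f12_explicit_aux n k hk hn
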